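/- arXiv:1603.01887 — 3 statements merged into one kernel-verified Lean document; each statement's English description precedes it below -/
import Mathlib

section
/- Let P and Q be discrete probability distributions on a countable set with equal support, and suppose the max divergence satisfies D_∞(P‖Q) ≤ ε and D_∞(Q‖P) ≤ ε for some ε ≥ 0. Then the expected privacy loss satisfies E[L_(P‖Q)] = D_KL(P‖Q) ≤ ε·(e^ε − 1)/2, and the centered privacy loss random variable L_(P‖Q) − E[L_(P‖Q)] is ε-subgaussian. -/
open scoped ENNReal

/-- The probability that a discrete distribution `P` assigns to a set `S`. -/
noncomputable def pmfProb {α : Type*} (P : PMF α) (S : Set α) : ℝ≥0∞ :=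
  ∑' x, S.indicator (fun y => P y) x

/-- The (exponentiated) max divergence `exp (D_∞(P‖Q)) = sup_S P(S)/Q(S)`;
`D_∞(P‖Q) ≤ ε` is expressed as `DinfExp P Q ≤ ENNReal.ofReal (exp ε)`. -/
noncomputable def DinfExp {α : Type*} (P Q : PMF α) : ℝ≥0∞ :=
  ⨆ S : Set α, pmfProb P S / pmfProb Q S

/-- The KL divergence `D_KL(P‖Q) = E_{y∼P}[ln (P(y)/Q(y))]`, which is the expectation of
the privacy loss random variable `L_(P‖Q)`. -/
noncomputable def KL {α : Type*} (P Q : PMF α) : ℝ :=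
  ∑' x, (P x).toReal * Real.log ((P x).toReal / (Q x).toReal)

/-- The centered privacy loss random variable `L_(P‖Q) − E[L_(P‖Q)]` is τ-subgaussian. -/
def LossSubG {α : Type*} (P Q : PMF α) (τ : ℝ) : Prop :=
  ∀ l : ℝ,
    (∑' x, (P x).toReal *
        Real.exp (l * (Real.log ((P x).toReal / (Q x).toReal) - KL P Q)))
      ≤ Real.exp (l ^ 2 * τ ^ 2 / 2)

section AuxPureDPtoCDP
open Real Set



/-- Monotone on `Ici c` from derivative sign. -/
lemma aux_monoOn_Ici {F F' : ℝ → ℝ} (hF : ∀ t, HasDerivAt F (F' t) t) {c : ℝ}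
    (h' : ∀ t, c ≤ t → 0 ≤ F' t) : MonotoneOn F (Ici c) := by
  refine monotoneOn_of_deriv_nonneg (convex_Ici c)
    (fun t _ => (hF t).continuousAt.continuousWithinAt)
    (fun t ht => ((hF t).differentiableAt.differentiableWithinAt)) ?_
  intro t ht
  rw [interior_Ici] at ht
  rw [(hF t).deriv]
  exact h' t (le_of_lt ht)

lemma aux_antiOn_Iic {F F' : ℝ → ℝ} (hF : ∀ t, HasDerivAt F (F' t) t) {c : ℝ}
    (h' : ∀ t, t ≤ c → F' t ≤ 0) : AntitoneOn F (Iic c) := by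
  refine antitoneOn_of_deriv_nonpos (convex_Iic c)
    (fun t _ => (hF t).continuousAt.continuousWithinAt)
    (fun t ht => ((hF t).differentiableAt.differentiableWithinAt)) ?_
  intro t ht
  rw [interior_Iic] at ht
  rw [(hF t).deriv]
  exact h' t (le_of_lt ht)

/-- `(2 - x) * exp x ≤ 2 + x` for `x ≥ 0`. -/
lemma aux_pade {x : ℝ} (hx : 0 ≤ x) : (2 - x) * exp x ≤ 2 + x := by
  have hF : ∀ t : ℝ, HasDerivAt (fun s => (2 + s) * exp (-s) - (2 - s))
      (1 - (1 + t) * exp (-t)) t := by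
    intro t
    have h1 : HasDerivAt (fun s : ℝ => exp (-s)) (-exp (-t)) t := by
      simpa using ((hasDerivAt_id t).neg.exp)
    have h2 : HasDerivAt (fun s : ℝ => (2 + s) * exp (-s))
        (1 * exp (-t) + (2 + t) * (-exp (-t))) t :=
      (((hasDerivAt_id t).const_add 2)).mul h1
    have h3 : HasDerivAt (fun s : ℝ => (2 : ℝ) - s) (-1) t := by
      simpa using ((hasDerivAt_id t)).const_sub 2
    exact (h2.sub h3).congr_deriv (by ring)
  have hsign : ∀ t : ℝ, 0 ≤ 1 - (1 + t) * exp (-t) := by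
    intro t
    have h := add_one_le_exp t
    have hid : exp t * exp (-t) = 1 := by rw [← exp_add]; simp
    nlinarith [exp_pos (-t), mul_le_mul_of_nonneg_right h (le_of_lt (exp_pos (-t)))]
  have hmono := monotone_of_hasDerivAt_nonneg hF hsign
  have h0 := hmono hx
  simp only [add_zero, neg_zero, exp_zero, mul_one, sub_zero] at h0
  have hex := exp_pos x
  have hid : exp (-x) * exp x = 1 := by rw [← exp_add]; simp
  nlinarith [h0]

/-- `e^ε - 1 - ε ≤ ε (e^ε - 1) / 2` for `ε ≥ 0`. -/
lemma aux_kl_bound {ε : ℝ} (hε : 0 ≤ ε) : exp ε - 1 - ε ≤ ε * (exp ε - 1) / 2 := by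
  have := aux_pade hε
  nlinarith

/-- `2x + e^{-x} ≤ e^x` for `x ≥ 0`. -/
lemma aux_sinh {x : ℝ} (hx : 0 ≤ x) : 2 * x + exp (-x) ≤ exp x := by
  have hF : ∀ t : ℝ, HasDerivAt (fun s => exp s - exp (-s) - 2 * s)
      (exp t + exp (-t) - 2) t := by
    intro t
    have h1 : HasDerivAt (fun s : ℝ => exp (-s)) (-exp (-t)) t := by
      simpa using ((hasDerivAt_id t).neg.exp)
    have h2 := ((Real.hasDerivAt_exp t).sub h1).sub ((hasDerivAt_id t).const_mul 2)
    exact h2.congr_deriv (by ring)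
  have hsign : ∀ t : ℝ, 0 ≤ exp t + exp (-t) - 2 := by
    intro t
    have ha : exp (t/2) * exp (t/2) = exp t := by rw [← exp_add]; ring_nf
    have hb : exp (-(t/2)) * exp (-(t/2)) = exp (-t) := by rw [← exp_add]; ring_nf
    have hab : exp (t/2) * exp (-(t/2)) = 1 := by rw [← exp_add]; simp
    nlinarith [sq_nonneg (exp (t/2) - exp (-(t/2)))]
  have hmono := monotone_of_hasDerivAt_nonneg hF hsign
  have h0 := hmono hx
  simp only [neg_zero, exp_zero, mul_zero, sub_zero] at h0
  linarith [h0]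

/-- `0 ≤ t - 1 + exp (-t)`. -/
lemma aux_phi_nonneg (t : ℝ) : 0 ≤ t - 1 + exp (-t) := by
  have := add_one_le_exp (-t); linarith

/-- For `|t| ≤ ε`, `t - 1 + exp (-t) ≤ exp ε - 1 - ε`. -/
lemma aux_phi_bound {ε t : ℝ} (hε : 0 ≤ ε) (h1 : -ε ≤ t) (h2 : t ≤ ε) :
    t - 1 + exp (-t) ≤ exp ε - 1 - ε := by
  have hF : ∀ s : ℝ, HasDerivAt (fun u => u - 1 + exp (-u)) (1 - exp (-s)) s := by
    intro s
    have h1 : HasDerivAt (fun u : ℝ => exp (-u)) (-exp (-s)) s := by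
      simpa using ((hasDerivAt_id s).neg.exp)
    have := (((hasDerivAt_id s).sub_const 1)).add h1
    exact this.congr_deriv (by ring)
  rcases le_total t 0 with ht | ht
  · have hanti := aux_antiOn_Iic hF (c := 0) (fun s hs => by
      have : (1:ℝ) ≤ exp (-s) := by
        rw [← exp_zero]; exact exp_le_exp.mpr (by linarith)
      linarith)
    have := hanti (mem_Iic.mpr (by linarith : -ε ≤ (0:ℝ))) (mem_Iic.mpr ht) h1
    simp only [neg_neg] at this
    linarith
  · have hmono := aux_monoOn_Ici hF (c := 0) (fun s hs => by
      have : exp (-s) ≤ 1 := by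
        rw [← exp_zero]; exact exp_le_exp.mpr (by linarith)
      linarith)
    have hle := hmono (mem_Ici.mpr ht) (mem_Ici.mpr hε) h2
    have := aux_sinh hε
    simp only at hle
    linarith

/-- Hoeffding kernel: `(1-p) + p e^h ≤ exp (p h + h²/8)` for `p ∈ [0,1]`. -/
lemma aux_kernel {p : ℝ} (hp0 : 0 ≤ p) (hp1 : p ≤ 1) (h : ℝ) :
    (1 - p) + p * exp h ≤ exp (p * h + h ^ 2 / 8) := by
  set D : ℝ → ℝ := fun s => 1 - p + p * exp s with hDdef
  have hD : ∀ s, 0 < D s := by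
    intro s
    rcases eq_or_lt_of_le hp1 with rfl | hlt
    · simpa [hDdef] using exp_pos s
    · have : 0 ≤ p * exp s := mul_nonneg hp0 (exp_pos s).le
      simp only [hDdef]; linarith
  have hderD : ∀ s : ℝ, HasDerivAt D (p * exp s) s := by
    intro s
    simpa [hDdef] using (((Real.hasDerivAt_exp s).const_mul p).const_add (1 - p))
  set g : ℝ → ℝ := fun s => p * s + s ^ 2 / 8 - Real.log (D s) with hgdef
  set g' : ℝ → ℝ := fun s => p + s / 4 - p * exp s / D s with hg'def
  have hderg : ∀ s : ℝ, HasDerivAt g (g' s) s := by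
    intro s
    have hlog : HasDerivAt (fun u => Real.log (D u)) (p * exp s / D s) s :=
      (hderD s).log (hD s).ne'
    have hpoly : HasDerivAt (fun u : ℝ => p * u + u ^ 2 / 8) (p + s / 4) s := by
      have := ((hasDerivAt_id s).const_mul p).add ((hasDerivAt_pow 2 s).div_const 8)
      exact this.congr_deriv (by simp; ring)
    exact hpoly.sub hlog
  have hderg' : ∀ s : ℝ, HasDerivAt g'
      (1 / 4 - p * (1 - p) * exp s / (D s) ^ 2) s := by
    intro s
    have hq : HasDerivAt (fun u => p * exp u / D u)
        ((p * exp s * D s - p * exp s * (p * exp s)) / (D s) ^ 2) s :=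
      ((Real.hasDerivAt_exp s).const_mul p).div (hderD s) (hD s).ne'
    have hpoly : HasDerivAt (fun u : ℝ => p + u / 4) (1 / 4) s := by
      simpa using ((hasDerivAt_id s).div_const 4).const_add p
    have := hpoly.sub hq
    refine this.congr_deriv ?_
    have hDne := (hD s).ne'
    field_simp [hDdef]
    ring
  have hsign'' : ∀ s : ℝ, 0 ≤ 1 / 4 - p * (1 - p) * exp s / (D s) ^ 2 := by
    intro s
    have hD2 : 0 < (D s) ^ 2 := pow_pos (hD s) 2
    have : p * (1 - p) * exp s / (D s) ^ 2 ≤ 1 / 4 := by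
      rw [div_le_iff₀ hD2]
      have := sq_nonneg ((1 - p) - p * exp s)
      simp only [hDdef]
      nlinarith
    linarith
  have hmono' : Monotone g' := monotone_of_hasDerivAt_nonneg hderg' hsign''
  have hg'0 : g' 0 = 0 := by
    simp only [hg'def, hDdef, exp_zero, mul_one]
    have : (1 : ℝ) - p + p = 1 := by ring
    rw [this]
    simp
  have hgnonneg : ∀ s : ℝ, 0 ≤ g s := by
    have hg0 : g 0 = 0 := by
      simp [hgdef, hDdef]
    intro s
    rcases le_total s 0 with hs | hs
    · have hanti := aux_antiOn_Iic hderg (c := 0) (fun t ht => by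
        have := hmono' ht; rw [hg'0] at this; exact this)
      have := hanti (mem_Iic.mpr hs) (mem_Iic.mpr le_rfl) hs
      rw [hg0] at this; exact this
    · have hmono := aux_monoOn_Ici hderg (c := 0) (fun t ht => by
        have := hmono' ht; rw [hg'0] at this; exact this)
      have := hmono (mem_Ici.mpr le_rfl) (mem_Ici.mpr hs) hs
      rw [hg0] at this; exact this
  have := hgnonneg h
  have hlog : Real.log (D h) ≤ p * h + h ^ 2 / 8 := by
    simp only [hgdef] at this; linarith
  calc (1 - p) + p * exp h = D h := by simp [hDdef]
    _ = exp (Real.log (D h)) := (exp_log (hD h)).symm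
    _ ≤ exp (p * h + h ^ 2 / 8) := exp_le_exp.mpr hlog

/-- Hoeffding's lemma for countable sums. -/
lemma aux_hoeffding {α : Type*} (w y : α → ℝ) (a b : ℝ)
    (hw : ∀ x, 0 ≤ w x) (hwsum : Summable w) (hw1 : ∑' x, w x = 1)
    (hwy : Summable (fun x => w x * y x)) (hmean : ∑' x, w x * y x = 0)
    (hy : ∀ x, w x = 0 ∨ (a ≤ y x ∧ y x ≤ b)) (l : ℝ) :
    ∑' x, w x * exp (l * y x) ≤ exp (l ^ 2 * (b - a) ^ 2 / 8) := by
  have ha0 : a ≤ 0 := by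
    have h1 : ∀ x, w x * a ≤ w x * y x := by
      intro x
      rcases hy x with h | ⟨h, _⟩
      · simp [h]
      · exact mul_le_mul_of_nonneg_left h (hw x)
    have := Summable.tsum_le_tsum h1 (hwsum.mul_right a) hwy
    rw [tsum_mul_right, hw1, hmean, one_mul] at this
    exact this
  have hb0 : 0 ≤ b := by
    have h1 : ∀ x, w x * y x ≤ w x * b := by
      intro x
      rcases hy x with h | ⟨_, h⟩
      · simp [h]
      · exact mul_le_mul_of_nonneg_left h (hw x)
    have := Summable.tsum_le_tsum h1 hwy (hwsum.mul_right b)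
    rw [tsum_mul_right, hw1, hmean, one_mul] at this
    exact this
  rcases eq_or_lt_of_le (ha0.trans hb0) with hab | hab
  · -- a = b, hence a = b = 0 and all y with positive weight are 0
    have ha : a = 0 := le_antisymm ha0 (hab ▸ hb0 : (0:ℝ) ≤ a)
    have hb : b = 0 := by rw [← hab, ha]
    have hpt : ∀ x, w x * exp (l * y x) = w x := by
      intro x
      rcases hy x with h | ⟨h1, h2⟩
      · simp [h]
      · have : y x = 0 := le_antisymm (hb ▸ h2) (ha ▸ h1)
        simp [this]
    rw [tsum_congr hpt, hw1, ha, hb]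
    simp
  · set A := exp (l * a) with hA
    set B := exp (l * b) with hB
    have hba : 0 < b - a := sub_pos.mpr hab
    -- chord bound
    have hchord : ∀ x, w x * exp (l * y x) ≤
        (A / (b - a)) * (w x * b - w x * y x) + (B / (b - a)) * (w x * y x - w x * a) := by
      intro x
      rcases hy x with h | ⟨h1, h2⟩
      · simp [h]
      · have hw1x : (0:ℝ) ≤ (b - y x) / (b - a) := div_nonneg (by linarith) hba.le
        have hw2x : (0:ℝ) ≤ (y x - a) / (b - a) := by
          apply div_nonneg (by linarith) hba.le
        have hsum1 : (b - y x) / (b - a) + (y x - a) / (b - a) = 1 := by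
          field_simp
          ring
        have hconv := convexOn_exp.2 (Set.mem_univ (l * a)) (Set.mem_univ (l * b))
          hw1x hw2x hsum1
        simp only [smul_eq_mul] at hconv
        have harg : (b - y x) / (b - a) * (l * a) + (y x - a) / (b - a) * (l * b)
            = l * y x := by
          field_simp
          ring
        rw [harg] at hconv
        have := mul_le_mul_of_nonneg_left hconv (hw x)
        calc w x * exp (l * y x)
            ≤ w x * ((b - y x) / (b - a) * exp (l * a) + (y x - a) / (b - a) * exp (l * b)) :=
              this
          _ = (A / (b - a)) * (w x * b - w x * y x) + (B / (b - a)) * (w x * y x - w x * a) := by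
              rw [← hA, ← hB]
              field_simp
    -- summability of the majorant
    have hmaj : Summable (fun x => (A / (b - a)) * (w x * b - w x * y x)
        + (B / (b - a)) * (w x * y x - w x * a)) := by
      apply Summable.add
      · exact (((hwsum.mul_right b).sub hwy).mul_left _)
      · exact ((hwy.sub (hwsum.mul_right a)).mul_left _)
    have hlhs : Summable (fun x => w x * exp (l * y x)) := by
      apply Summable.of_nonneg_of_le (fun x => mul_nonneg (hw x) (exp_pos _).le) hchord hmaj
    have hle := Summable.tsum_le_tsum hchord hlhs hmaj
    have hmajval : ∑' x, ((A / (b - a)) * (w x * b - w x * y x)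
        + (B / (b - a)) * (w x * y x - w x * a)) = (b * A - a * B) / (b - a) := by
      rw [Summable.tsum_add (((hwsum.mul_right b).sub hwy).mul_left _)
        ((hwy.sub (hwsum.mul_right a)).mul_left _)]
      rw [tsum_mul_left, tsum_mul_left,
        Summable.tsum_sub (hwsum.mul_right b) hwy, Summable.tsum_sub hwy (hwsum.mul_right a),
        tsum_mul_right, tsum_mul_right, hw1, hmean]
      field_simp
      ring
    rw [hmajval] at hle
    refine hle.trans ?_
    -- apply the kernel with p = -a/(b-a), h = l*(b-a)
    set p := -a / (b - a) with hp
    have hp0 : 0 ≤ p := by apply div_nonneg (by linarith) hba.le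
    have hp1 : p ≤ 1 := by
      rw [hp, div_le_one hba]
      linarith
    have hker := aux_kernel hp0 hp1 (l * (b - a))
    have hAB : A * exp (l * (b - a)) = B := by
      rw [hA, hB, ← exp_add]
      ring_nf
    have hApos : 0 < A := exp_pos _
    have hmul := mul_le_mul_of_nonneg_left hker hApos.le
    have harg2 : l * a + (p * (l * (b - a)) + (l * (b - a)) ^ 2 / 8)
        = l ^ 2 * (b - a) ^ 2 / 8 := by
      rw [hp]
      field_simp
      ring
    have hApA : A * ((1 - p) + p * exp (l * (b - a))) = (b * A - a * B) / (b - a) := by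
      have hh : A * ((1 - p) + p * exp (l * (b - a))) = (1 - p) * A + p * B := by
        rw [← hAB]; ring
      rw [hh, hp]
      field_simp
      ring
    rw [hApA] at hmul
    calc (b * A - a * B) / (b - a) ≤ A * exp (p * (l * (b - a)) + (l * (b - a)) ^ 2 / 8) := hmul
      _ = exp (l ^ 2 * (b - a) ^ 2 / 8) := by
          rw [hA, ← exp_add, harg2]

lemma aux_pmfProb_singleton {α : Type*} (P : PMF α) (x : α) : pmfProb P {x} = P x := by
  unfold pmfProb
  rw [tsum_eq_single x]
  · simp
  · intro y hy
    exact Set.indicator_of_notMem (by simpa using hy) _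

/-- Pointwise bound from the max divergence. -/
lemma aux_pointwise {α : Type*} (P Q : PMF α) (ε : ℝ)
    (hsupp : P.support = Q.support)
    (h1 : DinfExp P Q ≤ ENNReal.ofReal (Real.exp ε)) (x : α) :
    (P x).toReal ≤ Real.exp ε * (Q x).toReal := by
  by_cases hQ : Q x = 0
  · have hx : x ∉ Q.support := by simpa [PMF.mem_support_iff] using hQ
    rw [← hsupp] at hx
    have hP : P x = 0 := by simpa [PMF.mem_support_iff] using hx
    simp [hP, hQ]
  · have hdiv : P x / Q x ≤ ENNReal.ofReal (Real.exp ε) := by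
      refine le_trans ?_ h1
      have := le_iSup (fun S : Set α => pmfProb P S / pmfProb Q S) ({x} : Set α)
      rwa [aux_pmfProb_singleton, aux_pmfProb_singleton] at this
    have hQt : Q x ≠ ⊤ := PMF.apply_ne_top Q x
    have hle : P x ≤ ENNReal.ofReal (Real.exp ε) * Q x := by
      rw [ENNReal.div_le_iff_le_mul (Or.inl hQ) (Or.inl hQt)] at hdiv
      exact hdiv
    have hfin : ENNReal.ofReal (Real.exp ε) * Q x ≠ ⊤ :=
      ENNReal.mul_ne_top ENNReal.ofReal_ne_top hQt
    have := ENNReal.toReal_mono hfin hle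
    rwa [ENNReal.toReal_mul, ENNReal.toReal_ofReal (exp_pos ε).le] at this

/-- **Pure DP implies concentrated DP (distributional form).** Let `P, Q` be discrete
distributions on a countable set with equal support such that `D_∞(P‖Q) ≤ ε` and
`D_∞(Q‖P) ≤ ε` for some `ε ≥ 0`. Then the expected privacy loss satisfies
`E[L_(P‖Q)] = D_KL(P‖Q) ≤ ε (e^ε − 1)/2`, and the centered privacy loss random variable
`L_(P‖Q) − E[L_(P‖Q)]` is ε-subgaussian. -/
theorem dp_implies_cdp {α : Type*} [Countable α] (P Q : PMF α) (ε : ℝ) (hε : 0 ≤ ε)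
    (hsupp : P.support = Q.support)
    (h1 : DinfExp P Q ≤ ENNReal.ofReal (Real.exp ε))
    (h2 : DinfExp Q P ≤ ENNReal.ofReal (Real.exp ε)) :
    KL P Q ≤ ε * (Real.exp ε - 1) / 2 ∧ LossSubG P Q ε := by
  set p : α → ℝ := fun x => (P x).toReal with hpdef
  set q : α → ℝ := fun x => (Q x).toReal with hqdef
  set z : α → ℝ := fun x => Real.log (p x / q x) with hzdef
  -- basic facts
  have hp_nonneg : ∀ x, 0 ≤ p x := fun x => ENNReal.toReal_nonneg
  have hq_nonneg : ∀ x, 0 ≤ q x := fun x => ENNReal.toReal_nonneg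
  have hp_sum : Summable p := ENNReal.summable_toReal (by rw [P.tsum_coe]; exact ENNReal.one_ne_top)
  have hq_sum : Summable q := ENNReal.summable_toReal (by rw [Q.tsum_coe]; exact ENNReal.one_ne_top)
  have hp_one : ∑' x, p x = 1 := by
    have := ENNReal.tsum_toReal_eq (fun a => PMF.apply_ne_top P a)
    rw [P.tsum_coe] at this
    simpa using this.symm
  have hq_one : ∑' x, q x = 1 := by
    have := ENNReal.tsum_toReal_eq (fun a => PMF.apply_ne_top Q a)
    rw [Q.tsum_coe] at this
    simpa using this.symm
  have hPQ : ∀ x, p x ≤ Real.exp ε * q x := aux_pointwise P Q ε hsupp h1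
  have hQP : ∀ x, q x ≤ Real.exp ε * p x := aux_pointwise Q P ε hsupp.symm h2
  -- zero sets coincide
  have hzero : ∀ x, p x = 0 ↔ q x = 0 := by
    intro x
    constructor
    · intro h
      have := hQP x
      rw [h, mul_zero] at this
      exact le_antisymm this (hq_nonneg x)
    · intro h
      have := hPQ x
      rw [h, mul_zero] at this
      exact le_antisymm this (hp_nonneg x)
  -- bound on the privacy loss
  have habs : ∀ x, p x = 0 ∨ (-ε ≤ z x ∧ z x ≤ ε) := by
    intro x
    by_cases hp0 : p x = 0
    · exact Or.inl hp0
    · right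
      have hppos : 0 < p x := lt_of_le_of_ne (hp_nonneg x) (Ne.symm hp0)
      have hqpos : 0 < q x := by
        rcases lt_or_eq_of_le (hq_nonneg x) with h | h
        · exact h
        · exact absurd ((hzero x).mpr h.symm) hp0
      have hdivpos : 0 < p x / q x := div_pos hppos hqpos
      constructor
      · rw [hzdef]
        simp only
        rw [Real.le_log_iff_exp_le hdivpos, Real.exp_neg,
          inv_le_iff_one_le_mul₀ (exp_pos ε), div_mul_eq_mul_div, le_div_iff₀ hqpos]
        nlinarith [hQP x]
      · rw [hzdef]
        simp only
        rw [Real.log_le_iff_le_exp hdivpos, div_le_iff₀ hqpos]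
        exact hPQ x
  -- summability of p * z
  have hpz_sum : Summable (fun x => p x * z x) := by
    apply Summable.of_norm_bounded (hp_sum.mul_left ε)
    intro x
    rcases habs x with h | ⟨h1', h2'⟩
    · simp [h]
    · rw [Real.norm_eq_abs, abs_mul, abs_of_nonneg (hp_nonneg x)]
      have : |z x| ≤ ε := abs_le.mpr ⟨h1', h2'⟩
      calc p x * |z x| ≤ p x * ε := mul_le_mul_of_nonneg_left this (hp_nonneg x)
        _ = ε * p x := by ring
  have hKL_eq : KL P Q = ∑' x, p x * z x := rfl
  -- pointwise decomposition p z = p Φ(z) + (p - q)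
  have hdecomp : ∀ x, p x * z x = p x * (z x - 1 + Real.exp (-z x)) + (p x - q x) := by
    intro x
    by_cases hp0 : p x = 0
    · have hq0 : q x = 0 := (hzero x).mp hp0
      simp [hp0, hq0]
    · have hppos : 0 < p x := lt_of_le_of_ne (hp_nonneg x) (Ne.symm hp0)
      have hqpos : 0 < q x := by
        rcases lt_or_eq_of_le (hq_nonneg x) with h | h
        · exact h
        · exact absurd ((hzero x).mpr h.symm) hp0
      have hexp : Real.exp (-z x) = q x / p x := by
        rw [hzdef]
        simp only
        rw [Real.exp_neg, Real.exp_log (div_pos hppos hqpos), inv_div]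
      rw [hexp]
      field_simp
      ring
  set C : ℝ := Real.exp ε - 1 - ε with hC
  have hΦ_bound : ∀ x, p x * (z x - 1 + Real.exp (-z x)) ≤ p x * C := by
    intro x
    rcases habs x with h | ⟨h1', h2'⟩
    · simp [h, hC]
    · exact mul_le_mul_of_nonneg_left (aux_phi_bound hε h1' h2') (hp_nonneg x)
  have hΦ_nonneg : ∀ x, 0 ≤ p x * (z x - 1 + Real.exp (-z x)) :=
    fun x => mul_nonneg (hp_nonneg x) (aux_phi_nonneg (z x))
  have hΦ_sum : Summable (fun x => p x * (z x - 1 + Real.exp (-z x))) :=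
    Summable.of_nonneg_of_le hΦ_nonneg hΦ_bound (hp_sum.mul_right C)
  -- KL = ∑ p Φ(z)
  have hKL_phi : KL P Q = ∑' x, p x * (z x - 1 + Real.exp (-z x)) := by
    rw [hKL_eq, tsum_congr hdecomp,
      Summable.tsum_add hΦ_sum (hp_sum.sub hq_sum), Summable.tsum_sub hp_sum hq_sum, hp_one, hq_one]
    ring
  have hKL_le_C : KL P Q ≤ C := by
    rw [hKL_phi]
    have := Summable.tsum_le_tsum hΦ_bound hΦ_sum (hp_sum.mul_right C)
    rw [tsum_mul_right, hp_one, one_mul] at this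
    exact this
  constructor
  · exact hKL_le_C.trans (by rw [hC]; exact aux_kl_bound hε)
  · -- subgaussian part via Hoeffding
    intro l
    have hwy_sum : Summable (fun x => p x * (z x - KL P Q)) := by
      have : (fun x => p x * (z x - KL P Q))
          = fun x => p x * z x - p x * KL P Q := by
        funext x; ring
      rw [this]
      exact hpz_sum.sub (hp_sum.mul_right _)
    have hmean : ∑' x, p x * (z x - KL P Q) = 0 := by
      have : (fun x => p x * (z x - KL P Q))
          = fun x => p x * z x - p x * KL P Q := by
        funext x; ring
      rw [this, Summable.tsum_sub hpz_sum (hp_sum.mul_right _), tsum_mul_right, hp_one, ← hKL_eq]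
      ring
    have hy : ∀ x, p x = 0 ∨ ((-ε - KL P Q) ≤ z x - KL P Q ∧ z x - KL P Q ≤ ε - KL P Q) := by
      intro x
      rcases habs x with h | ⟨h1', h2'⟩
      · exact Or.inl h
      · exact Or.inr ⟨by linarith, by linarith⟩
    have hhoeff := aux_hoeffding p (fun x => z x - KL P Q) (-ε - KL P Q) (ε - KL P Q)
      hp_nonneg hp_sum hp_one hwy_sum hmean hy l
    have harg : l ^ 2 * ((ε - KL P Q) - (-ε - KL P Q)) ^ 2 / 8 = l ^ 2 * ε ^ 2 / 2 := by
      ring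
    rw [harg] at hhoeff
    exact hhoeff

end AuxPureDPtoCDP
end

section
/- If M and M' are discrete probability distributions on a common countable support that are ε-antipodal for some ε ≥ 0, then D_KL(M‖M') = D_KL(M'‖M). -/
open scoped ENNReal

/-- **Antipodal distributions have symmetric KL divergence.** If `M, M'` are discrete
distributions on a common countable support that are ε-antipodal for some `ε ≥ 0`
(equal supports, max divergences at most `ε`, and every log-ratio on the support lies in
`{−ε, 0, ε}`), then `D_KL(M‖M') = D_KL(M'‖M)`. -/
theorem antipodal_kl_symm {α : Type*} [Countable α] (M M' : PMF α) (ε : ℝ) (hε : 0 ≤ ε)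
    (hsupp : M.support = M'.support)
    (h1 : DinfExp M M' ≤ ENNReal.ofReal (Real.exp ε))
    (h2 : DinfExp M' M ≤ ENNReal.ofReal (Real.exp ε))
    (hanti : ∀ x ∈ M.support,
      Real.log ((M x).toReal / (M' x).toReal) ∈ ({-ε, 0, ε} : Set ℝ)) :
    KL M M' = KL M' M := by
  classical
  set f : α → ℝ := fun x => (M x).toReal with hfdef
  set g : α → ℝ := fun x => (M' x).toReal with hgdef
  have hsupp' : ∀ x, M x ≠ 0 ↔ M' x ≠ 0 := by
    intro x
    constructor
    · intro h; exact (PMF.mem_support_iff M' x).mp (hsupp ▸ (PMF.mem_support_iff M x).mpr h)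
    · intro h; exact (PMF.mem_support_iff M x).mp (hsupp ▸ (PMF.mem_support_iff M' x).mpr h)
  have hfpos : ∀ x, M x ≠ 0 → 0 < f x := fun x hx =>
    ENNReal.toReal_pos hx (M.apply_ne_top x)
  have hgpos : ∀ x, M x ≠ 0 → 0 < g x := fun x hx =>
    ENNReal.toReal_pos ((hsupp' x).mp hx) (M'.apply_ne_top x)
  have hf0 : ∀ x, M x = 0 → f x = 0 := by intro x hx; simp [hfdef, hx]
  have hg0 : ∀ x, M x = 0 → g x = 0 := by
    intro x hx
    have : M' x = 0 := by by_contra h; exact ((hsupp' x).mpr h) hx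
    simp [hgdef, this]
  have key : ∀ x, M x ≠ 0 → f x = Real.exp (Real.log (f x / g x)) * g x := by
    intro x hx
    rw [Real.exp_log (div_pos (hfpos x hx) (hgpos x hx)),
      div_mul_cancel₀ _ (hgpos x hx).ne']
  have hlogsymm : ∀ x, M x ≠ 0 →
      Real.log (g x / f x) = - Real.log (f x / g x) := by
    intro x hx
    rw [Real.log_div (hgpos x hx).ne' (hfpos x hx).ne',
      Real.log_div (hfpos x hx).ne' (hgpos x hx).ne']
    ring
  have hKL1 : KL M M' = ∑' x, f x * Real.log (f x / g x) := rfl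
  have hKL2 : KL M' M = ∑' x, g x * Real.log (g x / f x) := rfl
  rcases eq_or_lt_of_le hε with hε0 | hεpos
  · -- ε = 0 : both KL divergences vanish termwise
    have hz1 : ∀ x, f x * Real.log (f x / g x) = 0 := by
      intro x
      by_cases hx : M x = 0
      · simp [hf0 x hx]
      · rcases hanti x ((PMF.mem_support_iff M x).mpr hx) with h | h | h
        · rw [h, ← hε0]; ring
        · rw [h]; ring
        · rw [h, ← hε0]; ring
    have hz2 : ∀ x, g x * Real.log (g x / f x) = 0 := by
      intro x
      by_cases hx : M x = 0
      · simp [hg0 x hx]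
      · rw [hlogsymm x hx]
        rcases hanti x ((PMF.mem_support_iff M x).mpr hx) with h | h | h
        · rw [h, ← hε0]; ring
        · rw [h]; ring
        · rw [h, ← hε0]; ring
    rw [hKL1, hKL2, tsum_congr hz1, tsum_congr hz2]
  · -- ε > 0
    set gp : α → ℝ := fun x => if M x ≠ 0 ∧ Real.log (f x / g x) = ε then g x else 0 with hgp
    set fm : α → ℝ := fun x => if M x ≠ 0 ∧ Real.log (f x / g x) = -ε then f x else 0 with hfm
    have hfs : Summable f := ENNReal.summable_toReal (by rw [M.tsum_coe]; exact ENNReal.one_ne_top)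
    have hgs : Summable g := ENNReal.summable_toReal (by rw [M'.tsum_coe]; exact ENNReal.one_ne_top)
    have hfsum : ∑' x, f x = 1 := by
      rw [hfdef, ← ENNReal.tsum_toReal_eq (fun x => M.apply_ne_top x), M.tsum_coe,
        ENNReal.toReal_one]
    have hgsum : ∑' x, g x = 1 := by
      rw [hgdef, ← ENNReal.tsum_toReal_eq (fun x => M'.apply_ne_top x), M'.tsum_coe,
        ENNReal.toReal_one]
    have hgps : Summable gp := by
      apply Summable.of_nonneg_of_le _ _ hgs
      · intro x; rw [hgp]; dsimp only; split <;> simp [hgdef, ENNReal.toReal_nonneg]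
      · intro x; rw [hgp]; dsimp only; split
        · exact le_refl _
        · simp [hgdef, ENNReal.toReal_nonneg]
    have hfms : Summable fm := by
      apply Summable.of_nonneg_of_le _ _ hfs
      · intro x; rw [hfm]; dsimp only; split <;> simp [hfdef, ENNReal.toReal_nonneg]
      · intro x; rw [hfm]; dsimp only; split
        · exact le_refl _
        · simp [hfdef, ENNReal.toReal_nonneg]
    have hdiff : ∀ x, f x - g x = (Real.exp ε - 1) * (gp x - fm x) := by
      intro x
      by_cases hx : M x = 0
      · simp [hf0 x hx, hg0 x hx, hgp, hfm, hx]
      · rcases hanti x ((PMF.mem_support_iff M x).mpr hx) with h | h | h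
        · -- log ratio = -ε
          have hfe : f x = Real.exp (-ε) * g x := by rw [← h]; exact key x hx
          have hne : Real.log (f x / g x) ≠ ε := by rw [h]; intro hc; linarith
          have hgpx : gp x = 0 := by rw [hgp]; simp [hne]
          have hfmx : fm x = f x := by simp only [hfm]; exact if_pos ⟨hx, h⟩
          have hge : g x = Real.exp ε * f x := by
            rw [hfe, ← mul_assoc, ← Real.exp_add]; simp
          rw [hgpx, hfmx]
          nlinarith [hge]
        · -- log ratio = 0
          have hfe : f x = g x := by
            have := key x hx; rw [h, Real.exp_zero, one_mul] at this; exact this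
          have hne1 : Real.log (f x / g x) ≠ ε := by rw [h]; exact fun hc => by linarith
          have hne2 : Real.log (f x / g x) ≠ -ε := by rw [h]; exact fun hc => by linarith
          have hgpx : gp x = 0 := by rw [hgp]; simp [hne1]
          have hfmx : fm x = 0 := by rw [hfm]; simp [hne2]
          rw [hgpx, hfmx, hfe]; ring
        · -- log ratio = ε
          have hfe : f x = Real.exp ε * g x := by rw [← h]; exact key x hx
          have hne : Real.log (f x / g x) ≠ -ε := by rw [h]; intro hc; linarith
          have hgpx : gp x = g x := by simp only [hgp]; exact if_pos ⟨hx, h⟩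
          have hfmx : fm x = 0 := by rw [hfm]; simp [hne]
          rw [hgpx, hfmx, hfe]; ring
    have habs1 : ∀ x, f x * Real.log (f x / g x)
        = ε * Real.exp ε * gp x - ε * fm x := by
      intro x
      by_cases hx : M x = 0
      · simp [hf0 x hx, hgp, hfm, hx]
      · rcases hanti x ((PMF.mem_support_iff M x).mpr hx) with h | h | h
        · have hne : Real.log (f x / g x) ≠ ε := by rw [h]; intro hc; linarith
          have hgpx : gp x = 0 := by rw [hgp]; simp [hne]
          have hfmx : fm x = f x := by simp only [hfm]; exact if_pos ⟨hx, h⟩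
          rw [hgpx, hfmx, h]; ring
        · have hne1 : Real.log (f x / g x) ≠ ε := by rw [h]; exact fun hc => by linarith
          have hne2 : Real.log (f x / g x) ≠ -ε := by rw [h]; exact fun hc => by linarith
          have hgpx : gp x = 0 := by rw [hgp]; simp [hne1]
          have hfmx : fm x = 0 := by rw [hfm]; simp [hne2]
          rw [hgpx, hfmx, h]; ring
        · have hfe : f x = Real.exp ε * g x := by rw [← h]; exact key x hx
          have hne : Real.log (f x / g x) ≠ -ε := by rw [h]; intro hc; linarith
          have hgpx : gp x = g x := by simp only [hgp]; exact if_pos ⟨hx, h⟩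
          have hfmx : fm x = 0 := by rw [hfm]; simp [hne]
          rw [hgpx, hfmx, h, hfe]; ring
    have habs2 : ∀ x, g x * Real.log (g x / f x)
        = ε * Real.exp ε * fm x - ε * gp x := by
      intro x
      by_cases hx : M x = 0
      · simp [hg0 x hx, hgp, hfm, hx]
      · rw [hlogsymm x hx]
        rcases hanti x ((PMF.mem_support_iff M x).mpr hx) with h | h | h
        · have hge : g x = Real.exp ε * f x := by
            have hfe : f x = Real.exp (-ε) * g x := by rw [← h]; exact key x hx
            rw [hfe, ← mul_assoc, ← Real.exp_add]; simp
          have hne : Real.log (f x / g x) ≠ ε := by rw [h]; intro hc; linarith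
          have hgpx : gp x = 0 := by rw [hgp]; simp [hne]
          have hfmx : fm x = f x := by simp only [hfm]; exact if_pos ⟨hx, h⟩
          rw [hgpx, hfmx, h, hge]; ring
        · have hfe : f x = g x := by
            have := key x hx; rw [h, Real.exp_zero, one_mul] at this; exact this
          have hne1 : Real.log (f x / g x) ≠ ε := by rw [h]; exact fun hc => by linarith
          have hne2 : Real.log (f x / g x) ≠ -ε := by rw [h]; exact fun hc => by linarith
          have hgpx : gp x = 0 := by rw [hgp]; simp [hne1]
          have hfmx : fm x = 0 := by rw [hfm]; simp [hne2]
          rw [hgpx, hfmx, h]; ring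
        · have hne : Real.log (f x / g x) ≠ -ε := by rw [h]; intro hc; linarith
          have hgpx : gp x = g x := by simp only [hgp]; exact if_pos ⟨hx, h⟩
          have hfmx : fm x = 0 := by rw [hfm]; simp [hne]
          rw [hgpx, hfmx, h]; ring
    -- conclude ∑ gp = ∑ fm
    have hzero : (Real.exp ε - 1) * (∑' x, gp x - ∑' x, fm x) = 0 := by
      have h0 : ∑' x, (f x - g x) = 0 := by
        rw [Summable.tsum_sub hfs hgs, hfsum, hgsum, sub_self]
      calc (Real.exp ε - 1) * (∑' x, gp x - ∑' x, fm x)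
          = ∑' x, (Real.exp ε - 1) * (gp x - fm x) := by
            rw [tsum_mul_left, Summable.tsum_sub hgps hfms]
        _ = ∑' x, (f x - g x) := tsum_congr (fun x => (hdiff x).symm)
        _ = 0 := h0
    have hexpne : Real.exp ε - 1 ≠ 0 := by
      have : (1 : ℝ) < Real.exp ε := by
        rw [← Real.exp_zero]; exact Real.exp_lt_exp.mpr hεpos
      linarith
    have hA : ∑' x, gp x = ∑' x, fm x := by
      have := (mul_eq_zero.mp hzero).resolve_left hexpne
      linarith
    rw [hKL1, hKL2, tsum_congr habs1, tsum_congr habs2,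
      Summable.tsum_sub (hgps.mul_left _) (hfms.mul_left _),
      Summable.tsum_sub (hfms.mul_left _) (hgps.mul_left _),
      tsum_mul_left, tsum_mul_left, tsum_mul_left, tsum_mul_left, hA]
end

section
/- For every ε ≥ 0, every α ∈ [−1,1] with α ≠ 0, and every p ≥ 0, writing s = sign(α) ∈ {−1, 1}, the following inequality holds: p · e^(s·ε) · ((e^(α·ε) − 1)/(e^(s·ε) − 1)) · s · ε − p · e^(α·ε) · α · ε ≥ 0 (where for ε = 0 the quotient is interpreted by continuity as α). Equivalently, the per-element contribution to KL divergence does not decrease when the mass pair (e^(α·ε)·p, p) is split into the antipodal pair with log-ratio s·ε and an equal-mass remainder. -/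
/-- Chord inequality for `x * log x`: if `q ∈ [0,1]` and `e^{aε} = (1-q)·1 + q·e^{sε}`,
then `e^{aε}·(aε) ≤ q·e^{sε}·(sε)`. -/
lemma mul_log_chord (x y : ℝ) (q : ℝ) (hq0 : 0 ≤ q) (hq1 : q ≤ 1)
    (hx : (1 - q) * 1 + q * Real.exp y = Real.exp x) :
    Real.exp x * x ≤ q * (Real.exp y * y) := by
  have h := Real.convexOn_mul_log.2 (x := (1:ℝ)) (y := Real.exp y)
    (by simp) (le_of_lt (Real.exp_pos y)) (by linarith : (0:ℝ) ≤ 1 - q) hq0 (by ring)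
  simp only [smul_eq_mul] at h
  rw [hx] at h
  simp only [Real.log_exp, Real.log_one, mul_zero, mul_one] at h
  linarith

/-- **Per-element KL contribution grows under the antipodal split.** For every `ε ≥ 0`,
every `α ∈ [−1,1]` with `α ≠ 0`, and every `p ≥ 0`, writing `s = sign α ∈ {−1, 1}` and
`q = (e^(αε) − 1)/(e^(sε) − 1)` (interpreted by continuity as `α` when `ε = 0`), we have
`p · e^(sε) · q · s · ε − p · e^(αε) · α · ε ≥ 0`. -/
theorem kl_grows (ε a p s q : ℝ) (hε : 0 ≤ ε) (ha : a ∈ Set.Icc (-1 : ℝ) 1) (ha0 : a ≠ 0)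
    (hp : 0 ≤ p) (hs : s = if 0 < a then 1 else -1)
    (hq : q = if ε = 0 then a else (Real.exp (a * ε) - 1) / (Real.exp (s * ε) - 1)) :
    0 ≤ p * Real.exp (s * ε) * q * s * ε - p * Real.exp (a * ε) * a * ε := by
  rcases eq_or_lt_of_le hε with h0 | hεpos
  · simp [← h0]
  obtain ⟨ha1, ha2⟩ := ha
  rw [hq, if_neg (ne_of_gt hεpos)] at *
  set Q := (Real.exp (a * ε) - 1) / (Real.exp (s * ε) - 1) with hQ
  have key : Real.exp (a * ε) * (a * ε) ≤ Q * (Real.exp (s * ε) * (s * ε)) := by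
    by_cases hapos : 0 < a
    · have hs1 : s = 1 := by rw [hs, if_pos hapos]
      subst hs1
      have hd : (0:ℝ) < Real.exp (1 * ε) - 1 := by
        simpa using Real.exp_lt_exp.mpr (by linarith : (0:ℝ) < 1 * ε)
      have hn : (0:ℝ) ≤ Real.exp (a * ε) - 1 := by
        simpa using Real.exp_le_exp.mpr (by positivity : (0:ℝ) ≤ a * ε)
      have hnd : Real.exp (a * ε) ≤ Real.exp (1 * ε) :=
        Real.exp_le_exp.mpr (by nlinarith)
      refine mul_log_chord _ _ _ (div_nonneg hn hd.le)
        ((div_le_one hd).mpr (by linarith)) ?_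
      rw [hQ, one_mul] at *
      field_simp
      ring
    · have haneg : a < 0 := lt_of_le_of_ne (not_lt.mp hapos) ha0
      have hs1 : s = -1 := by rw [hs, if_neg hapos]
      subst hs1
      have hd : Real.exp ((-1) * ε) - 1 < 0 := by
        simpa using Real.exp_lt_exp.mpr (by linarith : (-1:ℝ) * ε < 0)
      have hn : Real.exp (a * ε) - 1 ≤ 0 := by
        simpa using Real.exp_le_exp.mpr (by nlinarith : a * ε ≤ 0)
      have hnd : Real.exp ((-1) * ε) ≤ Real.exp (a * ε) :=
        Real.exp_le_exp.mpr (by nlinarith)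
      refine mul_log_chord _ _ _ (div_nonneg_iff.mpr (Or.inr ⟨hn, hd.le⟩)) ?_ ?_
      · exact div_le_one_iff.mpr (Or.inr (Or.inr ⟨hd, by linarith⟩))
      · rw [hQ, neg_one_mul] at *
        field_simp [hd.ne]
        ring
  nlinarith [mul_le_mul_of_nonneg_left key hp]
end
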